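/- Let T be the infinite rooted k-ary tree (k ≥ 2) with graph metric d. For any finite subsets E, F of T and any integer r ≥ 0, the number of pairs (x,y) ∈ E × F with d(x,y) = r is at most 2·|E|^{1/2}·|F|^{1/2}·k^{r/2}. -/

import Mathlib

/-- Length of the longest common prefix of two lists (read from the root of the tree). -/
def lcp {α : Type*} [DecidableEq α] : List α → List α → ℕ
  | a :: as, b :: bs => if a = b then lcp as bs + 1 else 0
  | _, _ => 0

/-- The graph distance in the infinite rooted `k`-ary tree, whose vertices are finite
words over `Fin k` (paths from the root). -/
def treeDist {α : Type*} [DecidableEq α] (x y : List α) : ℕ :=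
  (x.length - lcp x y) + (y.length - lcp x y)

variable {α : Type*} [DecidableEq α]

lemma lcp_nil_left (y : List α) : lcp ([] : List α) y = 0 := by cases y <;> rfl
lemma lcp_nil_right (x : List α) : lcp x ([] : List α) = 0 := by cases x <;> rfl

lemma lcp_le_left (x y : List α) : lcp x y ≤ x.length := by
  induction x generalizing y with
  | nil => simp [lcp_nil_left]
  | cons a as ih =>
    cases y with
    | nil => simp [lcp_nil_right]
    | cons b bs =>
      simp only [lcp]
      split
      · simpa using ih bs
      · simp

lemma lcp_comm (x y : List α) : lcp x y = lcp y x := by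
  induction x generalizing y with
  | nil => simp [lcp_nil_left, lcp_nil_right]
  | cons a as ih =>
    cases y with
    | nil => simp [lcp_nil_left, lcp_nil_right]
    | cons b bs =>
      simp only [lcp]
      by_cases h : a = b
      · simp [h, ih bs]
      · rw [if_neg h, if_neg (fun hh => h hh.symm)]

lemma lcp_le_right (x y : List α) : lcp x y ≤ y.length := by
  rw [lcp_comm]; exact lcp_le_left y x

lemma take_lcp_eq (x y : List α) : x.take (lcp x y) = y.take (lcp x y) := by
  induction x generalizing y with
  | nil => simp [lcp_nil_left]
  | cons a as ih =>
    cases y with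
    | nil => simp [lcp_nil_right]
    | cons b bs =>
      simp only [lcp]
      split
      · next h => simp [h, ih bs]
      · simp

lemma get_lcp_ne (x y : List α) (h1 : lcp x y < x.length) (h2 : lcp x y < y.length) :
    x[lcp x y]'h1 ≠ y[lcp x y]'h2 := by
  induction x generalizing y with
  | nil => simp at h1
  | cons a as ih =>
    cases y with
    | nil => simp at h2
    | cons b bs =>
      by_cases h : a = b
      · have hl : lcp (a :: as) (b :: bs) = lcp as bs + 1 := by simp [lcp, h]
        have h1' : lcp as bs < as.length := by
          have := h1; rw [hl] at this; simpa using this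
        have h2' : lcp as bs < bs.length := by
          have := h2; rw [hl] at this; simpa using this
        have := ih bs h1' h2'
        simp only [hl]
        simpa using this
      · have hl : lcp (a :: as) (b :: bs) = 0 := by simp [lcp, h]
        simp only [hl]
        simpa using h

def allLists (k : ℕ) : ℕ → Finset (List (Fin k))
  | 0 => {[]}
  | n + 1 => ((Finset.univ : Finset (Fin k)) ×ˢ allLists k n).image fun p => p.1 :: p.2

lemma mem_allLists (k n : ℕ) (l : List (Fin k)) : l ∈ allLists k n ↔ l.length = n := by
  induction n generalizing l with
  | zero => cases l <;> simp [allLists]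
  | succ n ih =>
    cases l with
    | nil => simp [allLists]
    | cons a as => simp [allLists, ih]

lemma card_allLists (k n : ℕ) : (allLists k n).card = k ^ n := by
  induction n with
  | zero => simp [allLists]
  | succ n ih =>
    rw [allLists, Finset.card_image_of_injOn, Finset.card_product, Finset.card_univ,
      Fintype.card_fin, ih, pow_succ, mul_comm]
    intro p _ q _ h
    simp only [List.cons.injEq] at h
    exact Prod.ext h.1 h.2

lemma get_lcp_ne' (x y : List α) (n : ℕ) (hn : n = lcp x y) (h1 : n < x.length)
    (h2 : n < y.length) : x[n]'h1 ≠ y[n]'h2 := by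
  subst hn; exact get_lcp_ne x y h1 h2

lemma take_lcp_eq' (x y : List α) (n : ℕ) (hn : n = lcp x y) : x.take n = y.take n := by
  subst hn; exact take_lcp_eq x y

def cb (k r j : ℕ) : ℕ := if j = 0 then 1 else if j = r then k ^ r else (k - 1) * k ^ (j - 1)

lemma countA (k : ℕ) (x : List (Fin k)) (F : Finset (List (Fin k))) (r j : ℕ) (hj : j ≤ r) :
    (F.filter (fun y => treeDist x y = r ∧ y.length - lcp x y = j)).card ≤ cb k r j := by
  set S := F.filter (fun y => treeDist x y = r ∧ y.length - lcp x y = j) with hS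
  have key : ∀ y ∈ S, lcp x y = x.length - (r - j) ∧ y.length = lcp x y + j ∧
      x.length = lcp x y + (r - j) := by
    intro y hy
    rw [hS, Finset.mem_filter] at hy
    obtain ⟨-, hd, hjy⟩ := hy
    have h1 := lcp_le_left x y
    have h2 := lcp_le_right x y
    unfold treeDist at hd
    omega
  rcases Finset.eq_empty_or_nonempty S with hE | ⟨y₀, hy₀⟩
  · simp [hE, cb]
  by_cases hj0 : j = 0
  · -- every element equals x.take (x.length - r)
    have e : ∀ c ∈ S, c = x.take (x.length - r) := by
      intro c hc
      obtain ⟨k1, k2, k3⟩ := key c hc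
      have h1 : lcp x c = c.length := by omega
      have h2 := take_lcp_eq x c
      rw [h1, List.take_length] at h2
      rw [← h2]
      congr 1
      omega
    have : S.card ≤ 1 := by
      rw [Finset.card_le_one]
      intro a ha b hb
      rw [e a ha, e b hb]
    calc S.card ≤ 1 := this
      _ ≤ cb k r j := by simp [cb, hj0]
  by_cases hjr : j = r
  · -- x is an ancestor of y
    have e : ∀ c ∈ S, c = x ++ c.drop x.length := by
      intro c hc
      obtain ⟨k1, k2, k3⟩ := key c hc
      have hxl : lcp x c = x.length := by omega
      have h1 := take_lcp_eq x c
      rw [hxl, List.take_length] at h1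
      conv_lhs => rw [← List.take_append_drop x.length c]
      rw [← h1]
    have hmaps : ∀ y ∈ S, y.drop x.length ∈ allLists k j := by
      intro y hy
      obtain ⟨k1, k2, k3⟩ := key y hy
      rw [mem_allLists, List.length_drop]
      omega
    have hinj : Set.InjOn (fun y : List (Fin k) => y.drop x.length) (S : Set (List (Fin k))) := by
      intro a ha b hb hab
      dsimp only at hab
      rw [e a ha, e b hb, hab]
    have hcard := Finset.card_le_card_of_injOn _ hmaps hinj
    rw [card_allLists] at hcard
    calc S.card ≤ k ^ j := hcard
      _ ≤ cb k r j := by subst hjr; simp [cb, hj0]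
  · -- interior case : 0 < j < r
    have hj1 : 1 ≤ j := Nat.one_le_iff_ne_zero.mpr hj0
    have hjr' : j < r := lt_of_le_of_ne hj hjr
    set ℓ : ℕ := x.length - (r - j) with hℓ
    have k0 := key y₀ hy₀
    have hℓx : ℓ < x.length := by omega
    set T : Finset (List (Fin k)) :=
      ((Finset.univ.erase (x[ℓ]'hℓx)) ×ˢ allLists k (j - 1)).image fun p => p.1 :: p.2 with hT
    have hmaps : ∀ y ∈ S, y.drop ℓ ∈ T := by
      intro y hy
      have ky := key y hy
      have hlcp : ℓ = lcp x y := by omega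
      have hℓy : ℓ < y.length := by omega
      rw [hT, Finset.mem_image]
      refine ⟨(y[ℓ]'hℓy, y.drop (ℓ + 1)), ?_, ?_⟩
      · rw [Finset.mem_product]
        constructor
        · exact Finset.mem_erase.mpr ⟨(get_lcp_ne' x y ℓ hlcp hℓx hℓy).symm,
            Finset.mem_univ _⟩
        · rw [mem_allLists, List.length_drop]; omega
      · exact (List.drop_eq_getElem_cons hℓy).symm
    have hinj : Set.InjOn (fun y : List (Fin k) => y.drop ℓ) (S : Set (List (Fin k))) := by
      intro a ha b hb hab
      dsimp only at hab
      have ka := key a ha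
      have kb := key b hb
      have ea : a = x.take ℓ ++ a.drop ℓ := by
        conv_lhs => rw [← List.take_append_drop ℓ a]
        rw [take_lcp_eq' x a ℓ (by omega)]
      have eb : b = x.take ℓ ++ b.drop ℓ := by
        conv_lhs => rw [← List.take_append_drop ℓ b]
        rw [take_lcp_eq' x b ℓ (by omega)]
      rw [ea, eb, hab]
    have hcard := Finset.card_le_card_of_injOn _ hmaps hinj
    have hTcard : T.card = (k - 1) * k ^ (j - 1) := by
      rw [hT, Finset.card_image_of_injOn, Finset.card_product,
        Finset.card_erase_of_mem (Finset.mem_univ _), Finset.card_univ, Fintype.card_fin,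
        card_allLists]
      intro p _ q _ h
      simp only [List.cons.injEq] at h
      exact Prod.ext h.1 h.2
    rw [hTcard] at hcard
    calc S.card ≤ (k - 1) * k ^ (j - 1) := hcard
      _ ≤ cb k r j := by simp [cb, hj0, hjr]

lemma countB (k : ℕ) (y : List (Fin k)) (E : Finset (List (Fin k))) (r j : ℕ) (hj : j ≤ r) :
    (E.filter (fun x => treeDist x y = r ∧ y.length - lcp x y = j)).card ≤ cb k r (r - j) := by
  have heq : E.filter (fun x => treeDist x y = r ∧ y.length - lcp x y = j)
      = E.filter (fun x => treeDist y x = r ∧ x.length - lcp y x = r - j) := by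
    apply Finset.filter_congr
    intro x _
    have hc : lcp y x = lcp x y := lcp_comm y x
    have h1 := lcp_le_left x y
    have h2 := lcp_le_right x y
    unfold treeDist
    rw [hc]
    constructor
    · rintro ⟨hd, hy⟩; omega
    · rintro ⟨hd, hy⟩; omega
  rw [heq]
  exact countA k y E r (r - j) (by omega)

lemma slice_le_left (k r j : ℕ) (hj : j ≤ r) (E F : Finset (List (Fin k))) :
    ((E ×ˢ F).filter
      (fun p => treeDist p.1 p.2 = r ∧ p.2.length - lcp p.1 p.2 = j)).card
      ≤ E.card * cb k r j := by
  set S := (E ×ˢ F).filter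
      (fun p => treeDist p.1 p.2 = r ∧ p.2.length - lcp p.1 p.2 = j) with hSdef
  have h1 : ∀ p ∈ S, p.1 ∈ E := fun p hp =>
    (Finset.mem_product.mp (Finset.mem_filter.mp hp).1).1
  rw [Finset.card_eq_sum_card_fiberwise h1]
  have hfib : ∀ x ∈ E, (S.filter fun p => p.1 = x).card ≤ cb k r j := by
    intro x _
    refine le_trans (Finset.card_le_card_of_injOn Prod.snd ?_ ?_)
      (countA k x F r j hj)
    · intro p hp
      rw [Finset.mem_coe, Finset.mem_filter] at hp; rw [Finset.mem_coe, Finset.mem_filter]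
      obtain ⟨hp1, hp2⟩ := hp
      rw [hSdef, Finset.mem_filter, Finset.mem_product] at hp1
      rw [← hp2]
      exact ⟨hp1.1.2, hp1.2⟩
    · intro p hp q hq hpq
      rw [Finset.coe_filter, Set.mem_setOf_eq] at hp hq
      exact Prod.ext (hp.2.trans hq.2.symm) hpq
  calc ∑ x ∈ E, (S.filter fun p => p.1 = x).card ≤ ∑ x ∈ E, cb k r j :=
        Finset.sum_le_sum hfib
    _ = E.card * cb k r j := by rw [Finset.sum_const, smul_eq_mul]

lemma slice_le_right (k r j : ℕ) (hj : j ≤ r) (E F : Finset (List (Fin k))) :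
    ((E ×ˢ F).filter
      (fun p => treeDist p.1 p.2 = r ∧ p.2.length - lcp p.1 p.2 = j)).card
      ≤ F.card * cb k r (r - j) := by
  set S := (E ×ˢ F).filter
      (fun p => treeDist p.1 p.2 = r ∧ p.2.length - lcp p.1 p.2 = j) with hSdef
  have h1 : ∀ p ∈ S, p.2 ∈ F := fun p hp =>
    (Finset.mem_product.mp (Finset.mem_filter.mp hp).1).2
  rw [Finset.card_eq_sum_card_fiberwise h1]
  have hfib : ∀ y ∈ F, (S.filter fun p => p.2 = y).card ≤ cb k r (r - j) := by
    intro y _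
    refine le_trans (Finset.card_le_card_of_injOn Prod.fst ?_ ?_)
      (countB k y E r j hj)
    · intro p hp
      rw [Finset.mem_coe, Finset.mem_filter] at hp; rw [Finset.mem_coe, Finset.mem_filter]
      obtain ⟨hp1, hp2⟩ := hp
      rw [hSdef, Finset.mem_filter, Finset.mem_product] at hp1
      rw [← hp2]
      exact ⟨hp1.1.1, hp1.2⟩
    · intro p hp q hq hpq
      rw [Finset.coe_filter, Set.mem_setOf_eq] at hp hq
      exact Prod.ext hpq (hp.2.trans hq.2.symm)
  calc ∑ y ∈ F, (S.filter fun p => p.2 = y).card ≤ ∑ y ∈ F, cb k r (r - j) :=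
        Finset.sum_le_sum hfib
    _ = F.card * cb k r (r - j) := by rw [Finset.sum_const, smul_eq_mul]

lemma total_le (k r : ℕ) (E F : Finset (List (Fin k))) :
    ((E ×ˢ F).filter (fun p => treeDist p.1 p.2 = r)).card
      ≤ ∑ j ∈ Finset.range (r + 1),
          min (E.card * cb k r j) (F.card * cb k r (r - j)) := by
  set S := (E ×ˢ F).filter (fun p => treeDist p.1 p.2 = r) with hS
  have h1 : ∀ p ∈ S, p.2.length - lcp p.1 p.2 ∈ Finset.range (r + 1) := by
    intro p hp
    rw [hS, Finset.mem_filter] at hp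
    rw [Finset.mem_range]
    have := hp.2
    unfold treeDist at this
    omega
  rw [Finset.card_eq_sum_card_fiberwise h1]
  apply Finset.sum_le_sum
  intro j hj
  rw [Finset.mem_range] at hj
  have hj' : j ≤ r := by omega
  have heq : S.filter (fun p => p.2.length - lcp p.1 p.2 = j)
      = (E ×ˢ F).filter
          (fun p => treeDist p.1 p.2 = r ∧ p.2.length - lcp p.1 p.2 = j) := by
    rw [hS, Finset.filter_filter]
  rw [heq]
  exact le_min (slice_le_left k r j hj' E F) (slice_le_right k r j hj' E F)

lemma cb_partial_sum (k r M : ℕ) (hk : 1 ≤ k) (hM : M ≤ r - 1) (hr : 1 ≤ r) :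
    ∑ j ∈ Finset.range (M + 1), cb k r j = k ^ M := by
  induction M with
  | zero => simp [cb]
  | succ M ih =>
    rw [Finset.sum_range_succ, ih (by omega)]
    have h1 : cb k r (M + 1) = (k - 1) * k ^ M := by
      rw [cb, if_neg (by omega), if_neg (by omega)]; norm_num
    rw [h1]
    have h2 : 1 + (k - 1) = k := by omega
    calc k ^ M + (k - 1) * k ^ M = (1 + (k - 1)) * k ^ M := by ring
      _ = k ^ (M + 1) := by rw [h2]; ring

lemma cb_full_sum (k r : ℕ) (hk : 1 ≤ k) (hr : 1 ≤ r) :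
    ∑ j ∈ Finset.range (r + 1), cb k r j = k ^ (r - 1) + k ^ r := by
  rw [Finset.sum_range_succ]
  have h1 : r = (r - 1) + 1 := by omega
  rw [show cb k r r = k ^ r by rw [cb, if_neg (by omega), if_pos rfl]]
  congr 1
  calc ∑ j ∈ Finset.range r, cb k r j = ∑ j ∈ Finset.range ((r-1) + 1), cb k r j := by
        rw [← h1]
    _ = k ^ (r - 1) := cb_partial_sum k r (r-1) hk (le_refl _) hr

lemma cb_rev_sum (k r m : ℕ) (hk : 1 ≤ k) (hm : m < r) :
    ∑ j ∈ Finset.Ico (m + 1) (r + 1), cb k r (r - j) = k ^ (r - 1 - m) := by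
  rw [Finset.sum_Ico_reflect _ _ (by omega : r + 1 ≤ r + 1)]
  have h1 : r + 1 - (r + 1) = 0 := by omega
  have h2 : r + 1 - (m + 1) = r - m := by omega
  rw [h1, h2]
  have h3 : r - m = (r - 1 - m) + 1 := by omega
  rw [h3, ← Finset.range_eq_Ico]
  exact cb_partial_sum k r (r - 1 - m) hk (by omega) (by omega)

lemma amgm_le (kR a b : ℝ) (hk : 1 ≤ kR) (ha : 0 ≤ a) (hb : 0 ≤ b)
    (h1 : a ≤ kR * b) (h2 : b ≤ kR * a) : a + b ≤ 2 * Real.sqrt (kR * (a * b)) := by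
  have hab : (0:ℝ) ≤ kR * (a * b) := by positivity
  have hsq : (a + b) ^ 2 ≤ (2 * Real.sqrt (kR * (a * b))) ^ 2 := by
    rw [mul_pow, Real.sq_sqrt hab]
    nlinarith [mul_le_mul_of_nonneg_left h1 ha, mul_le_mul_of_nonneg_left h2 hb,
      mul_nonneg ha hb]
  calc a + b = Real.sqrt ((a + b) ^ 2) := (Real.sqrt_sq (by linarith)).symm
    _ ≤ Real.sqrt ((2 * Real.sqrt (kR * (a * b))) ^ 2) := Real.sqrt_le_sqrt hsq
    _ = 2 * Real.sqrt (kR * (a * b)) := Real.sqrt_sq (by positivity)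

lemma extreme_le (kR : ℝ) (r : ℕ) (X Y : ℝ) (hk : 1 ≤ kR) (hX : 0 ≤ X)
    (h : kR ^ r * X ≤ Y) :
    X * (kR ^ (r - 1) + kR ^ r) ≤ 2 * Real.sqrt X * Real.sqrt Y * Real.sqrt (kR ^ r) := by
  have hkr : (0:ℝ) ≤ kR ^ r := by positivity
  have hY : (0:ℝ) ≤ Y := le_trans (by positivity) h
  have h2 : Real.sqrt X * Real.sqrt (kR ^ r) ≤ Real.sqrt Y := by
    rw [← Real.sqrt_mul hX]
    apply Real.sqrt_le_sqrt
    calc X * kR ^ r = kR ^ r * X := by ring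
      _ ≤ Y := h
  have h3 : kR ^ (r - 1) ≤ kR ^ r := pow_le_pow_right₀ hk (by omega)
  calc X * (kR ^ (r - 1) + kR ^ r) ≤ 2 * (X * kR ^ r) := by nlinarith
    _ = 2 * ((Real.sqrt X * Real.sqrt X) * (Real.sqrt (kR ^ r) * Real.sqrt (kR ^ r))) := by
        rw [Real.mul_self_sqrt hX, Real.mul_self_sqrt hkr]
    _ = 2 * Real.sqrt X * (Real.sqrt X * Real.sqrt (kR ^ r)) * Real.sqrt (kR ^ r) := by ring
    _ ≤ 2 * Real.sqrt X * Real.sqrt Y * Real.sqrt (kR ^ r) := by gcongr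

lemma numeric_le (k r E F : ℕ) (hk : 2 ≤ k) (hr : 1 ≤ r) :
    ((∑ j ∈ Finset.range (r + 1), min (E * cb k r j) (F * cb k r (r - j)) : ℕ) : ℝ)
      ≤ 2 * Real.sqrt E * Real.sqrt F * Real.sqrt ((k : ℝ) ^ r) := by
  have hk1 : (1:ℝ) ≤ (k:ℝ) := by exact_mod_cast (by omega : 1 ≤ k)
  have hkpos : 0 < k := by omega
  rcases Nat.eq_zero_or_pos E with hE0 | hE1
  · subst hE0; simp
  rcases Nat.eq_zero_or_pos F with hF0 | hF1
  · subst hF0; simp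
  classical
  set P : ℕ → Prop := fun m => k ^ (2 * m) * E ≤ k ^ r * F with hP
  by_cases hP0 : P 0
  · by_cases hPr : P r
    · -- extreme case : k^r * E ≤ F
      have h' : k ^ (2 * r) * E ≤ k ^ r * F := hPr
      have hEF : k ^ r * E ≤ F := by
        rw [show 2 * r = r + r by ring, pow_add, mul_assoc] at h'
        exact Nat.le_of_mul_le_mul_left h' (pow_pos hkpos r)
      have hsum : (∑ j ∈ Finset.range (r + 1), min (E * cb k r j) (F * cb k r (r - j)))
          ≤ E * (k ^ (r - 1) + k ^ r) := by
        calc ∑ j ∈ Finset.range (r + 1), min (E * cb k r j) (F * cb k r (r - j))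
            ≤ ∑ j ∈ Finset.range (r + 1), E * cb k r j :=
              Finset.sum_le_sum (fun j _ => min_le_left _ _)
          _ = E * ∑ j ∈ Finset.range (r + 1), cb k r j := by rw [Finset.mul_sum]
          _ = E * (k ^ (r - 1) + k ^ r) := by rw [cb_full_sum k r (by omega) hr]
      calc ((∑ j ∈ Finset.range (r + 1), min (E * cb k r j) (F * cb k r (r - j)) : ℕ) : ℝ)
          ≤ ((E * (k ^ (r - 1) + k ^ r) : ℕ) : ℝ) := by exact_mod_cast hsum
        _ = (E:ℝ) * ((k:ℝ) ^ (r - 1) + (k:ℝ) ^ r) := by push_cast; ring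
        _ ≤ 2 * Real.sqrt E * Real.sqrt F * Real.sqrt ((k:ℝ) ^ r) := by
            apply extreme_le _ _ _ _ hk1 (by positivity)
            exact_mod_cast hEF
    · -- middle case
      set m := Nat.findGreatest P r with hm_def
      have hm : P m := Nat.findGreatest_spec (Nat.zero_le r) hP0
      have hmr : m ≤ r := Nat.findGreatest_le r
      have hmlt : m < r := lt_of_le_of_ne hmr (fun h => hPr (h ▸ hm))
      have hm1 : ¬ P (m + 1) :=
        Nat.findGreatest_is_greatest (by rw [← hm_def]; omega) (by omega)
      have hmN : k ^ (2 * m) * E ≤ k ^ r * F := hm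
      have hm1N : ¬ (k ^ (2 * (m + 1)) * E ≤ k ^ r * F) := hm1
      have hsum : (∑ j ∈ Finset.range (r + 1), min (E * cb k r j) (F * cb k r (r - j)))
          ≤ E * k ^ m + F * k ^ (r - 1 - m) := by
        rw [Finset.range_eq_Ico,
          ← Finset.sum_Ico_consecutive _ (Nat.zero_le (m + 1)) (by omega : m + 1 ≤ r + 1)]
        apply Nat.add_le_add
        · calc ∑ j ∈ Finset.Ico 0 (m + 1), min (E * cb k r j) (F * cb k r (r - j))
              ≤ ∑ j ∈ Finset.Ico 0 (m + 1), E * cb k r j :=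
                Finset.sum_le_sum (fun j _ => min_le_left _ _)
            _ = E * ∑ j ∈ Finset.Ico 0 (m + 1), cb k r j := by rw [Finset.mul_sum]
            _ = E * k ^ m := by
                rw [← Finset.range_eq_Ico, cb_partial_sum k r m (by omega) (by omega) hr]
        · calc ∑ j ∈ Finset.Ico (m + 1) (r + 1), min (E * cb k r j) (F * cb k r (r - j))
              ≤ ∑ j ∈ Finset.Ico (m + 1) (r + 1), F * cb k r (r - j) :=
                Finset.sum_le_sum (fun j _ => min_le_right _ _)
            _ = F * ∑ j ∈ Finset.Ico (m + 1) (r + 1), cb k r (r - j) := by rw [Finset.mul_sum]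
            _ = F * k ^ (r - 1 - m) := by rw [cb_rev_sum k r m (by omega) hmlt]
      have hkm : (0:ℝ) < (k:ℝ) ^ m := by positivity
      have hkm1 : (0:ℝ) < (k:ℝ) ^ (m + 1) := by positivity
      have hc1 : (k:ℝ) ^ (2 * m) * E ≤ (k:ℝ) ^ r * F := by exact_mod_cast hmN
      have hc2 : (k:ℝ) ^ r * F < (k:ℝ) ^ (2 * (m + 1)) * E := by
        have := Nat.lt_of_not_le hm1N
        exact_mod_cast this
      have e1 : (k:ℝ) ^ m * (k:ℝ) ^ m = (k:ℝ) ^ (2 * m) := by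
        rw [← pow_add]; congr 1; ring
      have e2 : (k:ℝ) ^ (r - 1 - m) * (k:ℝ) ^ m * (k:ℝ) ^ 1 = (k:ℝ) ^ r := by
        rw [← pow_add, ← pow_add]; congr 1; omega
      have e3 : (k:ℝ) ^ (r - 1 - m) * (k:ℝ) ^ (m + 1) = (k:ℝ) ^ r := by
        rw [← pow_add]; congr 1; omega
      have e4 : (k:ℝ) ^ m * (k:ℝ) ^ (m + 1) * (k:ℝ) ^ 1 = (k:ℝ) ^ (2 * (m + 1)) := by
        rw [← pow_add, ← pow_add]; congr 1; ring
      have h1 : (E:ℝ) * (k:ℝ) ^ m ≤ (k:ℝ) * ((F:ℝ) * (k:ℝ) ^ (r - 1 - m)) := by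
        rw [← mul_le_mul_iff_of_pos_right hkm]
        calc (E:ℝ) * (k:ℝ) ^ m * (k:ℝ) ^ m = (k:ℝ) ^ (2 * m) * E := by rw [← e1]; ring
          _ ≤ (k:ℝ) ^ r * F := hc1
          _ = (k:ℝ) * ((F:ℝ) * (k:ℝ) ^ (r - 1 - m)) * (k:ℝ) ^ m := by
              rw [← e2]; ring
      have h2 : (F:ℝ) * (k:ℝ) ^ (r - 1 - m) ≤ (k:ℝ) * ((E:ℝ) * (k:ℝ) ^ m) := by
        rw [← mul_le_mul_iff_of_pos_right hkm1]
        calc (F:ℝ) * (k:ℝ) ^ (r - 1 - m) * (k:ℝ) ^ (m + 1) = (k:ℝ) ^ r * F := by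
              rw [← e3]; ring
          _ ≤ (k:ℝ) ^ (2 * (m + 1)) * E := le_of_lt hc2
          _ = (k:ℝ) * ((E:ℝ) * (k:ℝ) ^ m) * (k:ℝ) ^ (m + 1) := by
              rw [← e4]; ring
      have hfin := amgm_le (k:ℝ) ((E:ℝ) * (k:ℝ) ^ m) ((F:ℝ) * (k:ℝ) ^ (r - 1 - m)) hk1
        (by positivity) (by positivity) h1 h2
      calc ((∑ j ∈ Finset.range (r + 1), min (E * cb k r j) (F * cb k r (r - j)) : ℕ) : ℝ)
          ≤ ((E * k ^ m + F * k ^ (r - 1 - m) : ℕ) : ℝ) := by exact_mod_cast hsum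
        _ = (E:ℝ) * (k:ℝ) ^ m + (F:ℝ) * (k:ℝ) ^ (r - 1 - m) := by push_cast; ring
        _ ≤ 2 * Real.sqrt ((k:ℝ) * ((E:ℝ) * (k:ℝ) ^ m * ((F:ℝ) * (k:ℝ) ^ (r - 1 - m)))) := hfin
        _ = 2 * Real.sqrt ((E:ℝ) * (F:ℝ) * (k:ℝ) ^ r) := by
            congr 2
            rw [← e2]; ring
        _ = 2 * Real.sqrt E * Real.sqrt F * Real.sqrt ((k:ℝ) ^ r) := by
            rw [Real.sqrt_mul (by positivity : (0:ℝ) ≤ (E:ℝ) * (F:ℝ)),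
              Real.sqrt_mul (by positivity : (0:ℝ) ≤ (E:ℝ))]
            ring
  · -- extreme case : k^r * F ≤ E
    have hP0' : ¬ (k ^ (2 * 0) * E ≤ k ^ r * F) := hP0
    have hFE : k ^ r * F ≤ E := by
      simp only [Nat.mul_zero, pow_zero, one_mul, not_le] at hP0'
      omega
    have hrev : ∑ j ∈ Finset.range (r + 1), cb k r (r - j)
        = ∑ j ∈ Finset.range (r + 1), cb k r j := by
      have h := Finset.sum_range_reflect (fun j => cb k r j) (r + 1)
      simpa using h
    have hsum : (∑ j ∈ Finset.range (r + 1), min (E * cb k r j) (F * cb k r (r - j)))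
        ≤ F * (k ^ (r - 1) + k ^ r) := by
      calc ∑ j ∈ Finset.range (r + 1), min (E * cb k r j) (F * cb k r (r - j))
          ≤ ∑ j ∈ Finset.range (r + 1), F * cb k r (r - j) :=
            Finset.sum_le_sum (fun j _ => min_le_right _ _)
        _ = F * ∑ j ∈ Finset.range (r + 1), cb k r (r - j) := by rw [Finset.mul_sum]
        _ = F * (k ^ (r - 1) + k ^ r) := by rw [hrev, cb_full_sum k r (by omega) hr]
    calc ((∑ j ∈ Finset.range (r + 1), min (E * cb k r j) (F * cb k r (r - j)) : ℕ) : ℝ)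
        ≤ ((F * (k ^ (r - 1) + k ^ r) : ℕ) : ℝ) := by exact_mod_cast hsum
      _ = (F:ℝ) * ((k:ℝ) ^ (r - 1) + (k:ℝ) ^ r) := by push_cast; ring
      _ ≤ 2 * Real.sqrt F * Real.sqrt E * Real.sqrt ((k:ℝ) ^ r) := by
          apply extreme_le _ _ _ _ hk1 (by positivity)
          exact_mod_cast hFE
      _ = 2 * Real.sqrt E * Real.sqrt F * Real.sqrt ((k:ℝ) ^ r) := by ring

theorem stmt0 (k : ℕ) (hk : 2 ≤ k) (E F : Finset (List (Fin k))) (r : ℕ) :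
    ((((E ×ˢ F).filter (fun p => treeDist p.1 p.2 = r)).card : ℝ)) ≤
      2 * (E.card : ℝ) ^ ((1 : ℝ) / 2) * (F.card : ℝ) ^ ((1 : ℝ) / 2) *
        (k : ℝ) ^ ((r : ℝ) / 2) := by
  have hE : ((E.card : ℝ)) ^ ((1 : ℝ) / 2) = Real.sqrt E.card := by
    rw [← Real.sqrt_eq_rpow]
  have hF : ((F.card : ℝ)) ^ ((1 : ℝ) / 2) = Real.sqrt F.card := by
    rw [← Real.sqrt_eq_rpow]
  have hK : (k : ℝ) ^ ((r : ℝ) / 2) = Real.sqrt ((k : ℝ) ^ r) := by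
    rw [Real.sqrt_eq_rpow, ← Real.rpow_natCast (k:ℝ) r,
      ← Real.rpow_mul (by positivity : (0:ℝ) ≤ (k:ℝ))]
    congr 1; ring
  rw [hE, hF, hK]
  have h0 := total_le k r E F
  have hcast : ((((E ×ˢ F).filter (fun p => treeDist p.1 p.2 = r)).card : ℕ) : ℝ)
      ≤ ((∑ j ∈ Finset.range (r + 1),
          min (E.card * cb k r j) (F.card * cb k r (r - j)) : ℕ) : ℝ) :=
    Nat.cast_le.mpr h0
  rcases Nat.eq_zero_or_pos r with hr0 | hr1
  · subst hr0
    have hcb : cb k 0 0 = 1 := by simp [cb]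
    have hmin : (∑ j ∈ Finset.range 1, min (E.card * cb k 0 j) (F.card * cb k 0 (0 - j)))
        = min E.card F.card := by simp [hcb]
    rw [hmin] at hcast
    have hEF : ((min E.card F.card : ℕ) : ℝ) ≤ Real.sqrt E.card * Real.sqrt F.card := by
      rcases le_total E.card F.card with h | h
      · rw [min_eq_left h]
        calc ((E.card : ℕ) : ℝ) = Real.sqrt E.card * Real.sqrt E.card :=
              (Real.mul_self_sqrt (by positivity)).symm
          _ ≤ Real.sqrt E.card * Real.sqrt F.card := by gcongr <;> exact_mod_cast h
      · rw [min_eq_right h]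
        calc ((F.card : ℕ) : ℝ) = Real.sqrt F.card * Real.sqrt F.card :=
              (Real.mul_self_sqrt (by positivity)).symm
          _ ≤ Real.sqrt E.card * Real.sqrt F.card := by gcongr <;> exact_mod_cast h
    calc ((((E ×ˢ F).filter (fun p => treeDist p.1 p.2 = 0)).card : ℕ) : ℝ)
        ≤ Real.sqrt E.card * Real.sqrt F.card := le_trans hcast hEF
      _ ≤ 2 * Real.sqrt E.card * Real.sqrt F.card * Real.sqrt ((k:ℝ) ^ (0:ℕ)) := by
          rw [pow_zero, Real.sqrt_one]
          nlinarith [Real.sqrt_nonneg (E.card : ℝ), Real.sqrt_nonneg (F.card : ℝ)]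
  · exact le_trans hcast (numeric_le k r E.card F.card hk hr1)
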